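/- Let Σ ⊂ ℝ³ × ℝ be a set such that for every z = (x,t) ∈ Σ and every δ > 0 there exists 0 < r < δ with r < ε⁻² ∫_{Q_r(z)} F dx dt, where F ∈ L¹(ℝ⁴) is nonnegative and Q_r(z) is the parabolic cylinder. Then the one-dimensional parabolic Hausdorff measure of Σ is zero: 𝒫¹(Σ) = 0. -/

import Mathlib

open MeasureTheory Metric Set
open scoped ENNReal

noncomputable abbrev E3 := EuclideanSpace ℝ (Fin 3)

/-- The parabolic cylinder `Q_r(z) = B_r(x) × (t − r², t)`. -/
def pcyl (z : E3 × ℝ) (r : ℝ) : Set (E3 × ℝ) :=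
  ball z.1 r ×ˢ Set.Ioo (z.2 - r ^ 2) z.2

lemma pcyl_measurableSet (z : E3 × ℝ) (r : ℝ) : MeasurableSet (pcyl z r) :=
  measurableSet_ball.prod measurableSet_Ioo

lemma pcyl_isOpen (z : E3 × ℝ) (r : ℝ) : IsOpen (pcyl z r) :=
  isOpen_ball.prod isOpen_Ioo

lemma pcyl_nonempty (z : E3 × ℝ) {r : ℝ} (hr : 0 < r) : (pcyl z r).Nonempty :=
  ⟨(z.1, z.2 - r ^ 2 / 2), mem_ball_self hr, by constructor <;> nlinarith⟩

lemma pcyl_volume (z : E3 × ℝ) {r : ℝ} (hr : 0 < r) :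
    volume (pcyl z r)
      = ENNReal.ofReal (r ^ 3) * volume (ball (0 : E3) 1) * ENNReal.ofReal (r ^ 2) := by
  rw [pcyl, Measure.volume_eq_prod, Measure.prod_prod, Real.volume_Ioo,
    Measure.addHaar_ball _ _ hr.le, finrank_euclideanSpace_fin]
  congr 2
  ring

/-- Geometric enlargement: if `pcyl z r` meets `pcyl z' r'` with `r ≤ 2 r'`, then
`z` belongs to the enlarged cylinder centered at `(z'.1, z'.2 + 4 r'²)` of radius `6 r'`. -/
lemma mem_enlarged {z z' : E3 × ℝ} {r r' : ℝ} (hr : 0 < r) (hr' : 0 < r')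
    (hint : (pcyl z r ∩ pcyl z' r').Nonempty) (hle : r ≤ 2 * r') :
    z ∈ pcyl (z'.1, z'.2 + 4 * r' ^ 2) (6 * r') := by
  obtain ⟨p, ⟨hp1, hp2⟩, hq1, hq2⟩ := hint
  rw [mem_ball] at hp1 hq1
  constructor
  · rw [mem_ball]
    have h1 : dist z.1 z'.1 ≤ dist z.1 p.1 + dist p.1 z'.1 := dist_triangle _ _ _
    rw [dist_comm z.1 p.1] at h1
    simp only
    linarith
  · obtain ⟨ha, hb⟩ := hp2
    obtain ⟨hc, hd⟩ := hq2
    constructor <;> simp only <;> nlinarith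

/-- If at every point of `Σ` there are arbitrarily small radii `r` with
`r < ε⁻² ∫_{Q_r(z)} F`, for a fixed nonnegative `F ∈ L¹`, then the
one-dimensional parabolic Hausdorff measure of `Σ` vanishes, expressed here
through the existence of coverings by parabolic cylinders of arbitrarily small
total radius. -/
theorem parabolic_hausdorff_singular_set
    (S : Set (E3 × ℝ)) (F : E3 × ℝ → ℝ) (ε : ℝ) (hε : 0 < ε)
    (hF_nonneg : ∀ p, 0 ≤ F p) (hF_int : Integrable F (volume : Measure (E3 × ℝ)))
    (hcover : ∀ z ∈ S, ∀ δ > (0 : ℝ), ∃ r : ℝ, 0 < r ∧ r < δ ∧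
      r < ε⁻¹ ^ 2 * ∫ p in pcyl z r, F p) :
    ∀ η > (0 : ℝ), ∃ (c : ℕ → E3 × ℝ) (r : ℕ → ℝ),
      (∀ i, 0 < r i) ∧ S ⊆ ⋃ i, pcyl (c i) (r i) ∧
      (∑' i, ENNReal.ofReal (r i)) ≤ ENNReal.ofReal η := by
  classical
  intro η hη
  set G : E3 × ℝ → ℝ≥0∞ := fun p => ENNReal.ofReal (F p) with hGdef
  -- `G` has finite total integral
  have hGint : (∫⁻ p, G p) ≠ ⊤ := by
    have h := hF_int.hasFiniteIntegral
    rw [hasFiniteIntegral_iff_ofReal (Filter.Eventually.of_forall hF_nonneg)] at h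
    exact h.ne
  -- absolute continuity of the integral of `G`
  have hα0 : ENNReal.ofReal (ε ^ 2 * (η / 12)) ≠ 0 := by
    exact (ENNReal.ofReal_pos.2 (by positivity)).ne'
  obtain ⟨β, hβ0, hβ⟩ := exists_pos_setLIntegral_lt_of_measure_lt (μ := volume) hGint hα0
  -- fixed constants
  set C : ℝ≥0∞ := volume (ball (0 : E3) 1) with hCdef
  have hCtop : C ≠ ⊤ := measure_ball_lt_top.ne
  set K : ℝ≥0∞ := C * (ENNReal.ofReal (ε⁻¹ ^ 2) * ∫⁻ p, G p) with hKdef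
  have hKtop : K ≠ ⊤ :=
    ENNReal.mul_ne_top hCtop (ENNReal.mul_ne_top ENNReal.ofReal_ne_top hGint)
  -- choose a small δ
  obtain ⟨δ, hδK, hδmem⟩ :
      ∃ δ : ℝ, ENNReal.ofReal (δ ^ 4) * K < β ∧ δ ∈ Ioo (0 : ℝ) 1 := by
    have h2 : Filter.Tendsto (fun d : ℝ => d ^ 4) (nhdsWithin 0 (Ioi 0)) (nhds 0) :=
      tendsto_nhdsWithin_of_tendsto_nhds (by simpa using (continuous_pow 4).tendsto (0 : ℝ))
    have h3 : Filter.Tendsto (fun d : ℝ => ENNReal.ofReal (d ^ 4) * K)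
        (nhdsWithin 0 (Ioi 0)) (nhds 0) := by
      have := ENNReal.Tendsto.mul_const (ENNReal.tendsto_ofReal h2) (Or.inr hKtop)
      simpa using this
    have h4 : ∀ᶠ d in nhdsWithin (0 : ℝ) (Ioi 0), ENNReal.ofReal (d ^ 4) * K < β :=
      h3.eventually_lt_const hβ0
    have h5 : ∀ᶠ d in nhdsWithin (0 : ℝ) (Ioi 0), d ∈ Ioo (0 : ℝ) 1 :=
      Ioo_mem_nhdsGT_of_mem ⟨le_refl 0, zero_lt_one⟩
    exact (h4.and h5).exists
  have hδ0 : (0 : ℝ) < δ := hδmem.1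
  have hδ1 : δ < 1 := hδmem.2
  -- the fine family and Vitali's covering lemma
  set T : Set ((E3 × ℝ) × ℝ) :=
    {a | a.1 ∈ S ∧ 0 < a.2 ∧ a.2 < δ ∧ a.2 < ε⁻¹ ^ 2 * ∫ p in pcyl a.1 a.2, F p} with hTdef
  obtain ⟨u, huT, hdisj, hVit⟩ :=
    Vitali.exists_disjoint_subfamily_covering_enlargement
      (fun a : (E3 × ℝ) × ℝ => pcyl a.1 a.2) T (fun a => a.2) 2 one_lt_two
      (fun a ha => ha.2.1.le) δ (fun a ha => ha.2.2.1.le)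
      (fun a ha => pcyl_nonempty _ ha.2.1)
  have hcount : u.Countable :=
    hdisj.countable_of_isOpen (fun a _ => pcyl_isOpen _ _)
      (fun a ha => pcyl_nonempty _ (huT ha).2.1)
  haveI := hcount.to_subtype
  -- basic estimate on members of T
  have hkey : ∀ a ∈ T, ENNReal.ofReal a.2
      ≤ ENNReal.ofReal (ε⁻¹ ^ 2) * ∫⁻ p in pcyl a.1 a.2, G p := by
    intro a ha
    have h1 : ENNReal.ofReal (∫ p in pcyl a.1 a.2, F p) = ∫⁻ p in pcyl a.1 a.2, G p :=
      ofReal_integral_eq_lintegral_ofReal hF_int.integrableOn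
        (Filter.Eventually.of_forall fun p => hF_nonneg p)
    calc ENNReal.ofReal a.2
        ≤ ENNReal.ofReal (ε⁻¹ ^ 2 * ∫ p in pcyl a.1 a.2, F p) :=
          ENNReal.ofReal_le_ofReal ha.2.2.2.le
      _ = ENNReal.ofReal (ε⁻¹ ^ 2) * ENNReal.ofReal (∫ p in pcyl a.1 a.2, F p) :=
          ENNReal.ofReal_mul (by positivity)
      _ = _ := by rw [h1]
  -- disjointness on the subtype
  have hpair : Pairwise (Function.onFun Disjoint
      (fun b : u => pcyl (b : (E3 × ℝ) × ℝ).1 (b : (E3 × ℝ) × ℝ).2)) := by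
    intro b b' hne
    exact hdisj b.2 b'.2 (Subtype.coe_injective.ne hne)
  set U : Set (E3 × ℝ) := ⋃ b : u, pcyl (b : (E3 × ℝ) × ℝ).1 (b : (E3 × ℝ) × ℝ).2 with hUdef
  have hUlint : ∑' b : u, ∫⁻ p in pcyl (b : (E3 × ℝ) × ℝ).1 (b : (E3 × ℝ) × ℝ).2, G p
      = ∫⁻ p in U, G p :=
    (lintegral_iUnion (fun b => pcyl_measurableSet _ _) hpair G).symm
  -- total radius bound via the lintegral over the disjoint union
  have hsum1 : ∑' b : u, ENNReal.ofReal (b : (E3 × ℝ) × ℝ).2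
      ≤ ENNReal.ofReal (ε⁻¹ ^ 2) * ∫⁻ p in U, G p := by
    calc ∑' b : u, ENNReal.ofReal (b : (E3 × ℝ) × ℝ).2
        ≤ ∑' b : u, ENNReal.ofReal (ε⁻¹ ^ 2)
            * ∫⁻ p in pcyl (b : (E3 × ℝ) × ℝ).1 (b : (E3 × ℝ) × ℝ).2, G p :=
          ENNReal.tsum_le_tsum fun b => hkey _ (huT b.2)
      _ = ENNReal.ofReal (ε⁻¹ ^ 2)
            * ∑' b : u, ∫⁻ p in pcyl (b : (E3 × ℝ) × ℝ).1 (b : (E3 × ℝ) × ℝ).2, G p :=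
          ENNReal.tsum_mul_left
      _ = _ := by rw [hUlint]
  -- the union has small measure
  have hvol : volume U < β := by
    have h2 : ∀ b : u, volume (pcyl (b : (E3 × ℝ) × ℝ).1 (b : (E3 × ℝ) × ℝ).2)
        ≤ ENNReal.ofReal (δ ^ 4) * C * ENNReal.ofReal (b : (E3 × ℝ) × ℝ).2 := by
      intro b
      obtain ⟨_, hr0, hrδ, _⟩ := huT b.2
      set ρ : ℝ := (b : (E3 × ℝ) × ℝ).2 with hρ
      have h4 : ρ ^ 4 ≤ δ ^ 4 := pow_le_pow_left₀ hr0.le hrδ.le 4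
      have hr5 : ρ ^ 3 * ρ ^ 2 ≤ δ ^ 4 * ρ := by nlinarith
      rw [pcyl_volume _ hr0]
      calc ENNReal.ofReal (ρ ^ 3) * C * ENNReal.ofReal (ρ ^ 2)
          = ENNReal.ofReal (ρ ^ 3 * ρ ^ 2) * C := by
            rw [ENNReal.ofReal_mul (by positivity)]; ring
        _ ≤ ENNReal.ofReal (δ ^ 4 * ρ) * C := by
            gcongr
        _ = ENNReal.ofReal (δ ^ 4) * C * ENNReal.ofReal ρ := by
            rw [ENNReal.ofReal_mul (by positivity)]; ring
    calc volume U ≤ ∑' b : u, volume (pcyl (b : (E3 × ℝ) × ℝ).1 (b : (E3 × ℝ) × ℝ).2) :=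
          measure_iUnion_le _
      _ ≤ ∑' b : u, ENNReal.ofReal (δ ^ 4) * C * ENNReal.ofReal (b : (E3 × ℝ) × ℝ).2 :=
          ENNReal.tsum_le_tsum h2
      _ = ENNReal.ofReal (δ ^ 4) * C * ∑' b : u, ENNReal.ofReal (b : (E3 × ℝ) × ℝ).2 :=
          ENNReal.tsum_mul_left
      _ ≤ ENNReal.ofReal (δ ^ 4) * C * (ENNReal.ofReal (ε⁻¹ ^ 2) * ∫⁻ p in U, G p) := by
          gcongr
      _ ≤ ENNReal.ofReal (δ ^ 4) * C * (ENNReal.ofReal (ε⁻¹ ^ 2) * ∫⁻ p, G p) := by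
          gcongr
          exact Measure.restrict_le_self
      _ = ENNReal.ofReal (δ ^ 4) * K := by rw [hKdef]; ring
      _ < β := hδK
  -- hence the total radius is at most η/12
  have hUsmall : ∫⁻ p in U, G p < ENNReal.ofReal (ε ^ 2 * (η / 12)) := hβ U hvol
  have hsum2 : ∑' b : u, ENNReal.ofReal (b : (E3 × ℝ) × ℝ).2 ≤ ENNReal.ofReal (η / 12) := by
    calc ∑' b : u, ENNReal.ofReal (b : (E3 × ℝ) × ℝ).2
        ≤ ENNReal.ofReal (ε⁻¹ ^ 2) * ∫⁻ p in U, G p := hsum1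
      _ ≤ ENNReal.ofReal (ε⁻¹ ^ 2) * ENNReal.ofReal (ε ^ 2 * (η / 12)) := by
          gcongr
      _ = ENNReal.ofReal (ε⁻¹ ^ 2 * (ε ^ 2 * (η / 12))) :=
          (ENNReal.ofReal_mul (by positivity)).symm
      _ = ENNReal.ofReal (η / 12) := by
          congr 1
          field_simp
  -- enumerate the countable disjoint family and pad
  obtain ⟨g, hg⟩ := exists_injective_nat u
  set c : ℕ → E3 × ℝ := fun n =>
    if h : ∃ b : u, g b = n then
      ((h.choose : (E3 × ℝ) × ℝ).1.1,
        (h.choose : (E3 × ℝ) × ℝ).1.2 + 4 * (h.choose : (E3 × ℝ) × ℝ).2 ^ 2)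
    else (0, 0) with hcdef
  set r : ℕ → ℝ := fun n =>
    if h : ∃ b : u, g b = n then 6 * (h.choose : (E3 × ℝ) × ℝ).2
    else η / 2 ^ (n + 2) with hrdef
  refine ⟨c, r, ?_, ?_, ?_⟩
  · -- positivity of all radii
    intro n
    by_cases h : ∃ b : u, g b = n
    · have h0 : 0 < (h.choose : (E3 × ℝ) × ℝ).2 := (huT h.choose.2).2.1
      simp only [hrdef, dif_pos h]
      linarith
    · simp only [hrdef, dif_neg h]
      positivity
  · -- covering
    intro z hz
    obtain ⟨r₀, hr₀0, hr₀δ, hr₀int⟩ := hcover z hz δ hδ0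
    have haT : ((z, r₀) : (E3 × ℝ) × ℝ) ∈ T := ⟨hz, hr₀0, hr₀δ, hr₀int⟩
    obtain ⟨b, hbu, hbint, hble⟩ := hVit _ haT
    refine mem_iUnion.2 ⟨g ⟨b, hbu⟩, ?_⟩
    have hx : ∃ b' : u, g b' = g ⟨b, hbu⟩ := ⟨⟨b, hbu⟩, rfl⟩
    have hchoose : hx.choose = (⟨b, hbu⟩ : u) := hg hx.choose_spec
    have hb0 : 0 < b.2 := (huT hbu).2.1
    have := mem_enlarged hr₀0 hb0 hbint hble
    simp only [hcdef, hrdef, dif_pos hx, hchoose]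
    exact this
  · -- the total radius bound
    set A : ℕ → ℝ≥0∞ := fun n =>
      if h : ∃ b : u, g b = n then ENNReal.ofReal (6 * (h.choose : (E3 × ℝ) × ℝ).2)
      else 0 with hAdef
    have hptwise : ∀ n, ENNReal.ofReal (r n) ≤ A n + ENNReal.ofReal (η / 2 ^ (n + 2)) := by
      intro n
      by_cases h : ∃ b : u, g b = n
      · simp only [hrdef, hAdef, dif_pos h]
        exact le_self_add
      · simp only [hrdef, hAdef, dif_neg h, zero_add, le_refl]
    have hS1 : ∑' n, A n ≤ ENNReal.ofReal (η / 2) := by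
      have hsupp : Function.support A ⊆ Set.range g := by
        intro n hn
        by_contra hc
        apply hn
        have : ¬∃ b : u, g b = n := by
          rintro ⟨b, rfl⟩; exact hc ⟨b, rfl⟩
        simp only [hAdef, dif_neg this]
      have hAg : ∀ b : u, A (g b) = ENNReal.ofReal (6 * (b : (E3 × ℝ) × ℝ).2) := by
        intro b
        have hx : ∃ b' : u, g b' = g b := ⟨b, rfl⟩
        simp only [hAdef, dif_pos hx, hg hx.choose_spec]
      calc ∑' n, A n = ∑' b : u, A (g b) := (hg.tsum_eq hsupp).symm
        _ = ∑' b : u, ENNReal.ofReal 6 * ENNReal.ofReal (b : (E3 × ℝ) × ℝ).2 := by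
            refine tsum_congr fun b => ?_
            rw [hAg b, ENNReal.ofReal_mul (by norm_num)]
        _ = ENNReal.ofReal 6 * ∑' b : u, ENNReal.ofReal (b : (E3 × ℝ) × ℝ).2 :=
            ENNReal.tsum_mul_left
        _ ≤ ENNReal.ofReal 6 * ENNReal.ofReal (η / 12) := by gcongr
        _ = ENNReal.ofReal (6 * (η / 12)) := (ENNReal.ofReal_mul (by norm_num)).symm
        _ = ENNReal.ofReal (η / 2) := by congr 1; ring
    have hS2 : ∑' n : ℕ, ENNReal.ofReal (η / 2 ^ (n + 2)) ≤ ENNReal.ofReal (η / 2) := by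
      have hterm : ∀ n : ℕ, ENNReal.ofReal (η / 2 ^ (n + 2))
          = ENNReal.ofReal (η / 4) * (2⁻¹ : ℝ≥0∞) ^ n := by
        intro n
        have h1 : η / 2 ^ (n + 2) = η / 4 * (1 / 2) ^ n := by
          rw [pow_add, one_div, inv_pow]
          ring
        rw [h1, ENNReal.ofReal_mul (by positivity), ENNReal.ofReal_pow (by norm_num)]
        congr 2
        rw [ENNReal.ofReal_div_of_pos (by norm_num)]
        norm_num
      calc ∑' n : ℕ, ENNReal.ofReal (η / 2 ^ (n + 2))
          = ∑' n : ℕ, ENNReal.ofReal (η / 4) * (2⁻¹ : ℝ≥0∞) ^ n := tsum_congr hterm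
        _ = ENNReal.ofReal (η / 4) * ∑' n : ℕ, (2⁻¹ : ℝ≥0∞) ^ n := ENNReal.tsum_mul_left
        _ = ENNReal.ofReal (η / 4) * 2 := by
            rw [ENNReal.tsum_geometric, ENNReal.one_sub_inv_two, inv_inv]
        _ = ENNReal.ofReal (η / 4) * ENNReal.ofReal 2 := by
            rw [ENNReal.ofReal_ofNat]
        _ = ENNReal.ofReal (η / 4 * 2) := (ENNReal.ofReal_mul (by positivity)).symm
        _ = ENNReal.ofReal (η / 2) := by congr 1; ring
        _ ≤ ENNReal.ofReal (η / 2) := le_rfl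
    calc ∑' n, ENNReal.ofReal (r n)
        ≤ ∑' n, (A n + ENNReal.ofReal (η / 2 ^ (n + 2))) := ENNReal.tsum_le_tsum hptwise
      _ = (∑' n, A n) + ∑' n : ℕ, ENNReal.ofReal (η / 2 ^ (n + 2)) := ENNReal.tsum_add
      _ ≤ ENNReal.ofReal (η / 2) + ENNReal.ofReal (η / 2) := add_le_add hS1 hS2
      _ = ENNReal.ofReal η := by
          rw [← ENNReal.ofReal_add (by positivity) (by positivity)]
          congr 1
          ring
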